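/- Let d > 0, λ ∈ [0,1), u_max ∈ ℝ, and let (x_k)_{k∈ℤ} be strictly increasing with x_{k+1} - x_k ≥ d for all k. Define conductances c_{i,j} = e^{λ(x_i + x_j) - |x_j - x_i| + u_{ij}} for i ≠ j where all u_{ij} = u_{ji} ≤ u_max and u_{ij} ≥ u_min for some u_min. Then there is a constant K, depending only on d, λ, u_max, u_min, such that for every k ∈ ℤ: ∑_{j > k} c_{k,j} ≤ K · c_{k,k+1} and ∑_{j < k} c_{k,j} ≤ K · c_{k-1,k}. In particular ∑_{j≠k} c_{k,j} ≤ K (c_{k-1,k} + c_{k,k+1}). -/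

import Mathlib

/-- With conductances `c i j = exp(λ(x_i+x_j) - |x_j-x_i| + u i j)` (for `i ≠ j`),
`u` symmetric with `u_min ≤ u ≤ u_max`, gaps at least `d > 0`, `λ ∈ [0,1)`, there is a constant
`K` depending only on `d, λ, u_max, u_min` such that `∑_{j>k} c_{k,j} ≤ K c_{k,k+1}`,
`∑_{j<k} c_{k,j} ≤ K c_{k-1,k}` and `∑_{j≠k} c_{k,j} ≤ K (c_{k-1,k} + c_{k,k+1})`. -/
theorem stmt3 (d lam umin umax : ℝ) (hd : 0 < d) (hlam0 : 0 ≤ lam) (hlam1 : lam < 1) :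
    ∃ K : ℝ, 0 < K ∧
      ∀ (x : ℤ → ℝ) (u : ℤ → ℤ → ℝ) (c : ℤ → ℤ → ℝ),
        StrictMono x → (∀ k : ℤ, d ≤ x (k + 1) - x k) →
        (∀ i j : ℤ, u i j = u j i) →
        (∀ i j : ℤ, umin ≤ u i j ∧ u i j ≤ umax) →
        (∀ i j : ℤ, i ≠ j →
          c i j = Real.exp (lam * (x i + x j) - |x j - x i| + u i j)) →
        (∀ i : ℤ, c i i = 0) →
        ∀ k : ℤ,
          (∑' n : ℕ, c k (k + 1 + n)) ≤ K * c k (k + 1) ∧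
          (∑' n : ℕ, c k (k - 1 - n)) ≤ K * c (k - 1) k ∧
          (∑' j : ℤ, c k j) ≤ K * (c (k - 1) k + c k (k + 1)) := by
  have hl : (0:ℝ) < 1 - lam := by linarith
  set r : ℝ := Real.exp (-((1 - lam) * d)) with hrdef
  have hr0 : (0:ℝ) < r := Real.exp_pos _
  have hr1 : r < 1 := by
    rw [hrdef, Real.exp_lt_one_iff]
    nlinarith
  have hr1' : (0:ℝ) < 1 - r := by linarith
  refine ⟨Real.exp (umax - umin) / (1 - r), by positivity, ?_⟩
  intro x u c hx hgap husym hubd hc hc0 k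
  have hgap' : ∀ (m : ℤ) (n : ℕ), (n : ℝ) * d ≤ x (m + n) - x m := by
    intro m n
    induction n with
    | zero => simp
    | succ n ih =>
      have h1 := hgap (m + n)
      have he : (m + ((n:ℤ) + 1)) = (m + n) + 1 := by ring
      push_cast [he]
      push_cast at ih
      linarith
  have hcpos : ∀ i j : ℤ, i ≠ j → 0 < c i j := fun i j hij => by
    rw [hc i j hij]; exact Real.exp_pos _
  have hcnn : ∀ i j : ℤ, 0 ≤ c i j := fun i j => by
    rcases eq_or_ne i j with h | h
    · subst h; rw [hc0]
    · exact (hcpos i j h).le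
  set E := Real.exp (umax - umin) with hE
  have hEpos : 0 < E := Real.exp_pos _
  have hb1 : ∀ n : ℕ, c k (k + 1 + n) ≤ E * r ^ n * c k (k + 1) := by
    intro n
    rw [hc k (k + 1 + n) (by omega), hc k (k + 1) (by omega), hE, hrdef,
      ← Real.exp_nat_mul, ← Real.exp_add, ← Real.exp_add, Real.exp_le_exp]
    have hg : (n : ℝ) * d ≤ x (k + 1 + n) - x (k + 1) := by
      have h := hgap' (k + 1) n
      have he : (k + 1 + (n:ℤ)) = (k + 1) + (n:ℤ) := by ring
      rw [he]; exact h
    have ha1 : |x (k + 1 + n) - x k| = x (k + 1 + n) - x k :=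
      abs_of_nonneg (sub_nonneg.2 (hx.monotone (by omega)))
    have ha2 : |x (k + 1) - x k| = x (k + 1) - x k :=
      abs_of_nonneg (sub_nonneg.2 (hx.monotone (by omega)))
    rw [ha1, ha2]
    have hu1 := (hubd k (k + 1 + n)).2
    have hu2 := (hubd k (k + 1)).1
    nlinarith [mul_nonneg hl.le (sub_nonneg.2 hg)]
  have hb2 : ∀ n : ℕ, c k (k - 1 - n) ≤ E * r ^ n * c k (k - 1) := by
    intro n
    rw [hc k (k - 1 - n) (by omega), hc k (k - 1) (by omega), hE, hrdef,
      ← Real.exp_nat_mul, ← Real.exp_add, ← Real.exp_add, Real.exp_le_exp]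
    have hg : (n : ℝ) * d ≤ x (k - 1) - x (k - 1 - n) := by
      have h := hgap' (k - 1 - n) n
      have he : (k - 1 - (n:ℤ) + (n:ℤ)) = k - 1 := by ring
      rw [he] at h; exact h
    have ha1 : |x (k - 1 - n) - x k| = x k - x (k - 1 - n) := by
      rw [abs_sub_comm]
      exact abs_of_nonneg (sub_nonneg.2 (hx.monotone (by omega)))
    have ha2 : |x (k - 1) - x k| = x k - x (k - 1) := by
      rw [abs_sub_comm]
      exact abs_of_nonneg (sub_nonneg.2 (hx.monotone (by omega)))
    rw [ha1, ha2]
    have hu1 := (hubd k (k - 1 - n)).2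
    have hu2 := (hubd k (k - 1)).1
    have hnd : (0:ℝ) ≤ (n:ℝ) * d := by positivity
    nlinarith [mul_nonneg (by linarith : (0:ℝ) ≤ 1 + lam) (sub_nonneg.2 hg),
      mul_nonneg hlam0 hnd]
  have hcsym : c k (k - 1) = c (k - 1) k := by
    rw [hc k (k-1) (by omega), hc (k-1) k (by omega), husym k (k-1), abs_sub_comm,
      add_comm (x k)]
  have hgeo : Summable (fun n : ℕ => r ^ n) := summable_geometric_of_lt_one hr0.le hr1
  have hgeo_sum : ∑' n : ℕ, r ^ n = (1 - r)⁻¹ := tsum_geometric_of_lt_one hr0.le hr1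
  have key : ∀ (f : ℕ → ℝ) (C : ℝ), (∀ n, 0 ≤ f n) → (∀ n, f n ≤ E * r ^ n * C) →
      Summable f ∧ ∑' n, f n ≤ Real.exp (umax - umin) / (1 - r) * C := by
    intro f C hnn hle
    have hs : Summable (fun n : ℕ => E * r ^ n * C) := by
      have := hgeo.mul_left (E * C)
      simpa [mul_comm, mul_assoc, mul_left_comm] using this
    have hf : Summable f := Summable.of_nonneg_of_le hnn hle hs
    refine ⟨hf, ?_⟩
    have h1 : ∑' n, f n ≤ ∑' n, E * r ^ n * C := Summable.tsum_le_tsum hle hf hs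
    have h2 : ∑' n : ℕ, E * r ^ n * C = E * C * (1 - r)⁻¹ := by
      have heq : (fun n : ℕ => E * r ^ n * C) = fun n : ℕ => (E * C) * r ^ n := by
        funext n; ring
      rw [heq, tsum_mul_left, hgeo_sum]
    rw [h2] at h1
    calc ∑' n, f n ≤ E * C * (1 - r)⁻¹ := h1
      _ = Real.exp (umax - umin) / (1 - r) * C := by rw [hE]; ring
  obtain ⟨hs1, ht1⟩ := key (fun n => c k (k + 1 + n)) (c k (k + 1))
    (fun n => hcnn _ _) hb1
  obtain ⟨hs2, ht2⟩ := key (fun n => c k (k - 1 - n)) (c k (k - 1))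
    (fun n => hcnn _ _) hb2
  have ht2' : (∑' n : ℕ, c k (k - 1 - n)) ≤
      Real.exp (umax - umin) / (1 - r) * c (k - 1) k := by rwa [hcsym] at ht2
  refine ⟨ht1, ht2', ?_⟩
  set f : ℤ → ℝ := fun j => c k (k + j) with hf
  have h1 : HasSum (fun n : ℕ => f ((n:ℤ) + 1)) (∑' n : ℕ, c k (k + 1 + n)) := by
    have heq : (fun n : ℕ => f ((n:ℤ) + 1)) = fun n : ℕ => c k (k + 1 + n) := by
      funext n; simp only [hf]; congr 1; ring
    rw [heq]; exact hs1.hasSum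
  have h2 : HasSum (fun n : ℕ => f (-((n:ℤ) + 1))) (∑' n : ℕ, c k (k - 1 - n)) := by
    have heq : (fun n : ℕ => f (-((n:ℤ) + 1))) = fun n : ℕ => c k (k - 1 - n) := by
      funext n; simp only [hf]; congr 1; ring
    rw [heq]; exact hs2.hasSum
  have h1' : HasSum (fun n : ℕ => f (n : ℤ)) (∑' n : ℕ, c k (k + 1 + n)) := by
    have hshift : HasSum (fun n : ℕ => f ((n + 1 : ℕ) : ℤ)) (∑' n : ℕ, c k (k + 1 + n)) := by
      have heq : (fun n : ℕ => f ((n + 1 : ℕ) : ℤ)) = fun n : ℕ => f ((n:ℤ) + 1) := by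
        funext n; push_cast; rfl
      rw [heq]; exact h1
    have := (hasSum_nat_add_iff (f := fun n : ℕ => f (n : ℤ)) 1).mp hshift
    have hf0 : f (0 : ℤ) = 0 := by simp [hf, hc0]
    simpa [hf0] using this
  have hZ : HasSum f ((∑' n : ℕ, c k (k + 1 + n)) + ∑' n : ℕ, c k (k - 1 - n)) :=
    HasSum.of_nat_of_neg_add_one h1' h2
  have hZ' : HasSum (fun j : ℤ => c k j)
      ((∑' n : ℕ, c k (k + 1 + n)) + ∑' n : ℕ, c k (k - 1 - n)) := by
    have := (Equiv.addLeft k).hasSum_iff (f := fun j : ℤ => c k j)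
      (a := (∑' n : ℕ, c k (k + 1 + n)) + ∑' n : ℕ, c k (k - 1 - n))
    apply this.mp
    simpa [Function.comp_def, hf] using hZ
  rw [hZ'.tsum_eq]
  have hK : (0:ℝ) ≤ Real.exp (umax - umin) / (1 - r) := by positivity
  nlinarith [hcnn (k-1) k, hcnn k (k+1)]
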